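/- For a skew normal random variable X with density 2φ(x)Φ(αx) and δ = α/√(1+α²), the third central moment satisfies E[(X - E[X])³] = ((4-π)/2)·δ³·(2/π)^{3/2}, so that Pearson's skewness index γ₁ = E[(X-E[X])³]/Var(X)^{3/2} equals ((4-π)/2)·δ³(2/π)^{3/2}/(1 - 2δ²/π)^{3/2}. -/

import Mathlib

open MeasureTheory Real Filter Set

noncomputable def snPhi (x : ℝ) : ℝ := (Real.sqrt (2 * Real.pi))⁻¹ * Real.exp (-x ^ 2 / 2)
noncomputable def snCdf (x : ℝ) : ℝ := ∫ t in Set.Iic x, snPhi t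
lemma snPhi_eq (x : ℝ) : snPhi x = (Real.sqrt (2 * Real.pi))⁻¹ * Real.exp (-(1/2 : ℝ) * x ^ 2) := by
  rw [snPhi]; ring_nf
lemma snPhi_pos (x : ℝ) : 0 < snPhi x := by rw [snPhi]; positivity
lemma continuous_snPhi : Continuous snPhi := by unfold snPhi; continuity
lemma snPhi_even (x : ℝ) : snPhi (-x) = snPhi x := by simp [snPhi]
-- general integrability of x^n * exp(-b x^2)
lemma integrable_pow_mul_gauss {b : ℝ} (hb : 0 < b) (n : ℕ) :
    Integrable (fun x : ℝ => x ^ n * Real.exp (-b * x ^ 2)) := by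
  have h2 : (0:ℝ) < b / 2 := by linarith
  have hC : (0:ℝ) ≤ 1 + n.factorial * (2 / b) ^ n := by positivity
  apply Integrable.mono' (((integrable_exp_neg_mul_sq h2).const_mul
    (1 + n.factorial * (2 / b) ^ n)))
  · exact ((continuous_pow n).mul (by continuity)).aestronglyMeasurable
  · filter_upwards with x
    have hxp : Real.exp (-b * x ^ 2) = Real.exp (-(b/2) * x ^ 2) * Real.exp (-(b/2) * x ^ 2) := by
      rw [← Real.exp_add]; ring_nf
    rw [Real.norm_eq_abs, abs_mul, abs_pow, Real.abs_exp, hxp]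
    have key : |x| ^ n * Real.exp (-(b/2) * x ^ 2) ≤ 1 + n.factorial * (2 / b) ^ n := by
      have hxx : |x| ^ n ≤ 1 + x ^ (2 * n) := by
        rcases le_total (|x|) 1 with h | h
        · have h1 : |x| ^ n ≤ 1 := pow_le_one₀ (abs_nonneg x) h
          have h2 : (0:ℝ) ≤ x ^ (2*n) := by
            rw [pow_mul]; positivity
          linarith
        · have h1 : |x| ^ n ≤ |x| ^ (2 * n) := pow_le_pow_right₀ h (by omega)
          have h2 : |x| ^ (2 * n) = x ^ (2 * n) := by
            rw [pow_mul, pow_mul, sq_abs]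
          nlinarith
      have hpow : x ^ (2 * n) ≤ n.factorial * (2 / b) ^ n * Real.exp ((b/2) * x ^ 2) := by
        have := Real.pow_div_factorial_le_exp (x := (b/2) * x ^ 2) (by positivity) n
        have hfac : (0:ℝ) < n.factorial := by positivity
        rw [div_le_iff₀ hfac] at this
        have hxe : x ^ (2*n) = ((b/2) * x^2) ^ n * (2/b) ^ n := by
          rw [mul_pow, pow_mul]
          field_simp
          rw [mul_assoc, ← mul_pow, show b/2*(2/b) = (1:ℝ) by field_simp, one_pow, mul_one]
        rw [hxe]
        calc ((b/2) * x^2) ^ n * (2/b) ^ n ≤ (Real.exp ((b/2)*x^2) * n.factorial) * (2/b)^n := by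
              apply mul_le_mul_of_nonneg_right this (by positivity)
          _ = n.factorial * (2/b)^n * Real.exp ((b/2)*x^2) := by ring
      have hexp : Real.exp (-(b/2) * x ^ 2) ≤ 1 := by
        apply Real.exp_le_one_iff.mpr; nlinarith [sq_nonneg x]
      calc |x| ^ n * Real.exp (-(b/2) * x ^ 2)
          ≤ (1 + x ^ (2*n)) * Real.exp (-(b/2) * x ^ 2) :=
            mul_le_mul_of_nonneg_right hxx (Real.exp_pos _).le
        _ = Real.exp (-(b/2) * x^2) + x ^ (2*n) * Real.exp (-(b/2) * x^2) := by ring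
        _ ≤ 1 + n.factorial * (2/b)^n := by
            have h1 : Real.exp (-(b/2) * x^2) ≤ 1 := hexp
            have h2 : x ^ (2*n) * Real.exp (-(b/2) * x^2) ≤ n.factorial * (2/b)^n := by
              have he : Real.exp (-(b/2)*x^2) = (Real.exp ((b/2)*x^2))⁻¹ := by
                rw [← Real.exp_neg]; ring_nf
              rw [he, mul_inv_le_iff₀ (Real.exp_pos _)]
              linarith [hpow]
            linarith
    calc |x| ^ n * (Real.exp (-(b/2)*x^2) * Real.exp (-(b/2)*x^2))
        = (|x| ^ n * Real.exp (-(b/2)*x^2)) * Real.exp (-(b/2)*x^2) := by ring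
      _ ≤ (1 + n.factorial * (2/b)^n) * Real.exp (-(b/2)*x^2) :=
          mul_le_mul_of_nonneg_right key (Real.exp_pos _).le

lemma integral_sq_mul_gauss {b : ℝ} (hb : 0 < b) :
    ∫ x : ℝ, x ^ 2 * Real.exp (-b * x ^ 2) = Real.sqrt (π / b) / (2 * b) := by
  have hu : ∀ x : ℝ, HasDerivAt (fun y : ℝ => y) 1 x := fun x => hasDerivAt_id x
  have hv : ∀ x : ℝ, HasDerivAt (fun y : ℝ => -(2*b)⁻¹ * Real.exp (-b * y^2))
      (x * Real.exp (-b*x^2)) x := by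
    intro x
    have h1 : HasDerivAt (fun y : ℝ => -b * y ^ 2) (-b * (2*x)) x := by
      simpa using ((hasDerivAt_pow 2 x).const_mul (-b))
    have h2 := (h1.exp).const_mul (-(2*b)⁻¹)
    refine h2.congr_deriv ?_
    field_simp
  have huv' : Integrable ((fun y : ℝ => y) * fun x => x * Real.exp (-b*x^2)) := by
    have := integrable_pow_mul_gauss hb 2
    apply this.congr
    filter_upwards with x
    simp [Pi.mul_apply]; ring
  have hu'v : Integrable ((fun _ : ℝ => (1:ℝ)) * fun y : ℝ => -(2*b)⁻¹ * Real.exp (-b * y^2)) := by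
    have := (integrable_exp_neg_mul_sq hb).const_mul (-(2*b)⁻¹)
    apply this.congr
    filter_upwards with x
    simp [Pi.mul_apply]
  have huv : Integrable ((fun y : ℝ => y) * fun y : ℝ => -(2*b)⁻¹ * Real.exp (-b * y^2)) := by
    have := (integrable_pow_mul_gauss hb 1).const_mul (-(2*b)⁻¹)
    apply this.congr
    filter_upwards with x
    simp [Pi.mul_apply]; ring
  have key := integral_mul_deriv_eq_deriv_mul_of_integrable (fun x _ => hu x) (fun x _ => hv x) huv' hu'v huv
  have lhs : ∫ x : ℝ, (fun y : ℝ => y) x * (x * Real.exp (-b*x^2)) = ∫ x : ℝ, x^2 * Real.exp (-b*x^2) := by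
    congr 1; funext x; ring
  have rhs : ∫ x : ℝ, (1:ℝ) * (-(2*b)⁻¹ * Real.exp (-b * x^2)) = -(2*b)⁻¹ * Real.sqrt (π / b) := by
    simp only [one_mul]
    rw [integral_const_mul, integral_gaussian]
  rw [lhs] at key
  rw [key, rhs]
  field_simp

lemma integral_gauss_val {b : ℝ} : ∫ x : ℝ, Real.exp (-b * x ^ 2) = Real.sqrt (π / b) :=
  integral_gaussian b

lemma sqrt_two_pi_pos : (0:ℝ) < Real.sqrt (2 * π) := Real.sqrt_pos.mpr (by positivity)

lemma integrable_snPhi : Integrable snPhi := by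
  have := (integrable_exp_neg_mul_sq (by norm_num : (0:ℝ) < 1/2)).const_mul
    (Real.sqrt (2 * π))⁻¹
  apply this.congr
  filter_upwards with x
  rw [snPhi_eq]

lemma integral_snPhi : ∫ x : ℝ, snPhi x = 1 := by
  simp_rw [snPhi_eq]
  rw [integral_const_mul, integral_gaussian]
  have : π / (1/2 : ℝ) = 2 * π := by ring
  rw [this, inv_mul_cancel₀ sqrt_two_pi_pos.ne']

lemma integrable_pow_mul_snPhi (n : ℕ) : Integrable (fun x : ℝ => x ^ n * snPhi x) := by
  have := (integrable_pow_mul_gauss (by norm_num : (0:ℝ) < 1/2) n).const_mul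
    (Real.sqrt (2 * π))⁻¹
  apply this.congr
  filter_upwards with x
  rw [snPhi_eq]; ring

lemma integral_sq_mul_snPhi : ∫ x : ℝ, x ^ 2 * snPhi x = 1 := by
  simp_rw [snPhi_eq, show ∀ x : ℝ, x^2 * ((Real.sqrt (2*π))⁻¹ * Real.exp (-(1/2:ℝ)*x^2))
    = (Real.sqrt (2*π))⁻¹ * (x^2 * Real.exp (-(1/2:ℝ)*x^2)) from fun x => by ring]
  rw [integral_const_mul, integral_sq_mul_gauss (by norm_num : (0:ℝ) < 1/2)]
  have h1 : π / (1/2 : ℝ) = 2 * π := by ring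
  rw [h1]
  rw [show (2 * (1/2 : ℝ)) = 1 by norm_num, div_one, inv_mul_cancel₀ sqrt_two_pi_pos.ne']

lemma integral_odd_eq_zero {f : ℝ → ℝ} (hf : ∀ x, f (-x) = -f x) : ∫ x : ℝ, f x = 0 := by
  have h := integral_neg_eq_self f (volume : Measure ℝ)
  simp_rw [hf, integral_neg] at h
  linarith

-- snCdf basics
lemma snCdf_nonneg (x : ℝ) : 0 ≤ snCdf x :=
  setIntegral_nonneg measurableSet_Iic fun t _ => (snPhi_pos t).le

lemma snCdf_add_neg (x : ℝ) : snCdf (-x) + snCdf x = 1 := by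
  have h1 : snCdf x = ∫ t in Ioi (-x), snPhi t := by
    rw [snCdf, ← integral_comp_neg_Iic]
    simp_rw [snPhi_even]
  rw [snCdf, h1, intervalIntegral.integral_Iic_add_Ioi integrable_snPhi.integrableOn
    integrable_snPhi.integrableOn, integral_snPhi]

lemma snCdf_le_one (x : ℝ) : snCdf x ≤ 1 := by
  have := snCdf_add_neg x
  have := snCdf_nonneg (-x)
  linarith

lemma hasDerivAt_snCdf (y : ℝ) : HasDerivAt snCdf (snPhi y) y := by
  have key : snCdf = fun z => snCdf 0 + ∫ t in (0:ℝ)..z, snPhi t := by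
    funext z
    have := intervalIntegral.integral_Iic_sub_Iic (integrable_snPhi.integrableOn (s := Iic 0))
      (integrable_snPhi.integrableOn (s := Iic z))
    rw [snCdf, snCdf, ← this]
    ring
  rw [key]
  exact (intervalIntegral.integral_hasDerivAt_right
    (continuous_snPhi.intervalIntegrable 0 y)
    (continuous_snPhi.stronglyMeasurableAtFilter _ _)
    continuous_snPhi.continuousAt).const_add _

lemma continuous_snCdf : Continuous snCdf :=
  continuous_iff_continuousAt.mpr fun y => (hasDerivAt_snCdf y).continuousAt

lemma hasDerivAt_snPhi (x : ℝ) : HasDerivAt snPhi (-x * snPhi x) x := by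
  have h1 : HasDerivAt (fun y : ℝ => -(1/2:ℝ) * y ^ 2) (-x) x := by
    have := (hasDerivAt_pow 2 x).const_mul (-(1/2:ℝ))
    simpa using this.congr_deriv (by ring)
  have h2 := (h1.exp).const_mul (Real.sqrt (2 * π))⁻¹
  have : snPhi = fun y => (Real.sqrt (2 * π))⁻¹ * Real.exp (-(1/2:ℝ) * y ^ 2) :=
    funext snPhi_eq
  rw [this]
  refine h2.congr_deriv ?_
  beta_reduce
  ring

section Alpha
variable (α : ℝ)

lemma prod_snPhi (x : ℝ) : snPhi x * snPhi (α * x)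
    = (2 * π)⁻¹ * Real.exp (-((1 + α ^ 2)/2) * x ^ 2) := by
  rw [snPhi_eq, snPhi_eq]
  have h1 : (Real.sqrt (2 * π))⁻¹ * Real.exp (-(1/2:ℝ) * x ^ 2) *
      ((Real.sqrt (2 * π))⁻¹ * Real.exp (-(1/2:ℝ) * (α * x) ^ 2))
      = ((Real.sqrt (2 * π)) * (Real.sqrt (2 * π)))⁻¹ *
        (Real.exp (-(1/2:ℝ) * x ^ 2) * Real.exp (-(1/2:ℝ) * (α * x) ^ 2)) := by
    rw [mul_inv]; ring
  rw [h1, Real.mul_self_sqrt (by positivity), ← Real.exp_add]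
  congr 1
  ring

lemma hasDerivAt_g (x : ℝ) :
    HasDerivAt (fun y => 2 * snCdf (α * y) - 1) (2 * α * snPhi (α * x)) x := by
  have hin : HasDerivAt (fun y : ℝ => α * y) α x := by
    simpa using (hasDerivAt_id x).const_mul α
  have h := (hasDerivAt_snCdf (α * x)).comp x hin
  have h2 := (h.const_mul 2).sub_const 1
  refine h2.congr_deriv ?_
  ring

lemma abs_g_le_one (x : ℝ) : |2 * snCdf (α * x) - 1| ≤ 1 := by
  have h1 := snCdf_nonneg (α * x)
  have h2 := snCdf_le_one (α * x)
  rw [abs_le]; constructor <;> linarith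

lemma continuous_g : Continuous (fun y => 2 * snCdf (α * y) - 1) := by
  have : Continuous fun y : ℝ => α * y := by continuity
  exact ((continuous_const.mul (continuous_snCdf.comp this))).sub continuous_const

lemma g_odd (x : ℝ) : 2 * snCdf (α * (-x)) - 1 = -(2 * snCdf (α * x) - 1) := by
  have h := snCdf_add_neg (α * x)
  have : α * (-x) = -(α * x) := by ring
  rw [this]
  linarith

end Alpha

section Parts
variable (α : ℝ)

local notation "c" => (1 + α ^ 2) / 2
local notation "g" => fun y => 2 * snCdf (α * y) - 1

lemma c_pos : (0:ℝ) < (1 + α ^ 2) / 2 := by positivity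

-- integrability of snPhi x * snPhi (α x) times polynomial
lemma integrable_pow_prod_snPhi (n : ℕ) :
    Integrable (fun x : ℝ => x ^ n * (snPhi x * snPhi (α * x))) := by
  have := (integrable_pow_mul_gauss (c_pos α) n).const_mul (2 * π)⁻¹
  apply this.congr
  filter_upwards with x
  rw [prod_snPhi]; ring

lemma integrable_pow_snPhi_mul_g (n : ℕ) :
    Integrable (fun x : ℝ => x ^ n * snPhi x * (2 * snCdf (α * x) - 1)) := by
  apply Integrable.mono' (integrable_pow_mul_snPhi n).abs
  · exact (((continuous_pow n).mul continuous_snPhi).mul (continuous_g α)).aestronglyMeasurable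
  · filter_upwards with x
    rw [Real.norm_eq_abs, abs_mul]
    calc |x ^ n * snPhi x| * |2 * snCdf (α * x) - 1| ≤ |x ^ n * snPhi x| * 1 :=
          mul_le_mul_of_nonneg_left (abs_g_le_one α x) (abs_nonneg _)
      _ = |x ^ n * snPhi x| := mul_one _

lemma K1_eq : ∫ x : ℝ, x * snPhi x * (2 * snCdf (α * x) - 1)
    = 2 * α * ((2 * π)⁻¹ * Real.sqrt (π / ((1 + α ^ 2) / 2))) := by
  have hu : ∀ x : ℝ, HasDerivAt (fun y => -snPhi y) (x * snPhi x) x := by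
    intro x
    have := (hasDerivAt_snPhi x).neg
    refine this.congr_deriv ?_; ring
  have hv := hasDerivAt_g α
  have huv' : Integrable ((fun y => -snPhi y) * fun x => 2 * α * snPhi (α * x)) := by
    have := (integrable_pow_prod_snPhi α 0).const_mul (-(2 * α))
    apply this.congr
    filter_upwards with x
    simp only [Pi.mul_apply]
    ring
  have hu'v : Integrable ((fun x => x * snPhi x) * g) := by
    have := integrable_pow_snPhi_mul_g α 1
    apply this.congr
    filter_upwards with x
    simp only [Pi.mul_apply, pow_one]
  have huv : Integrable ((fun y => -snPhi y) * g) := by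
    have := (integrable_pow_snPhi_mul_g α 0).neg
    apply this.congr
    filter_upwards with x
    simp only [Pi.mul_apply, Pi.neg_apply, pow_zero, one_mul]
    ring
  have key := integral_mul_deriv_eq_deriv_mul_of_integrable (fun x _ => hu x) (fun x _ => hv x) huv' hu'v huv
  -- key : ∫ (-snPhi x) * (2α snPhi (αx)) = - ∫ (x snPhi x) * g x
  have lhs : ∫ x : ℝ, -snPhi x * (2 * α * snPhi (α * x))
      = -(2 * α) * ((2 * π)⁻¹ * Real.sqrt (π / ((1 + α ^ 2) / 2))) := by
    have heq : (fun x : ℝ => -snPhi x * (2 * α * snPhi (α * x)))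
        = fun x => -(2 * α) * (2 * π)⁻¹ * Real.exp (-((1 + α ^ 2)/2) * x ^ 2) := by
      funext x
      rw [show -snPhi x * (2 * α * snPhi (α * x)) = -(2*α) * (snPhi x * snPhi (α * x)) by ring,
        prod_snPhi]
      ring
    rw [heq, integral_const_mul, integral_gaussian]
    ring
  rw [lhs] at key
  linarith [key]
end Parts

section Parts3
variable (α : ℝ)

lemma K3_eq : ∫ x : ℝ, x ^ 3 * snPhi x * (2 * snCdf (α * x) - 1)
    = 2 * α * ((2 * π)⁻¹ * (Real.sqrt (π / ((1 + α ^ 2) / 2)) / (2 * ((1 + α ^ 2) / 2))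
        + 2 * Real.sqrt (π / ((1 + α ^ 2) / 2)))) := by
  have hu : ∀ x : ℝ, HasDerivAt (fun y => -(y ^ 2 + 2) * snPhi y) (x ^ 3 * snPhi x) x := by
    intro x
    have h1 : HasDerivAt (fun y : ℝ => -(y ^ 2 + 2)) (-(2 * x)) x := by
      have := ((hasDerivAt_pow 2 x).add_const 2).neg
      refine this.congr_deriv ?_ <;> ring
    have := h1.mul (hasDerivAt_snPhi x)
    refine this.congr_deriv ?_
    ring
  have hv := hasDerivAt_g α
  have huv' : Integrable ((fun y => -(y ^ 2 + 2) * snPhi y) * fun x => 2 * α * snPhi (α * x)) := by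
    have h2 := (integrable_pow_prod_snPhi α 2).const_mul (-(2 * α))
    have h0 := (integrable_pow_prod_snPhi α 0).const_mul (-(2 * α) * 2)
    apply (h2.add h0).congr
    filter_upwards with x
    simp only [Pi.mul_apply, Pi.add_apply, pow_zero]
    ring
  have hu'v : Integrable ((fun x => x ^ 3 * snPhi x) * fun y => 2 * snCdf (α * y) - 1) := by
    have := integrable_pow_snPhi_mul_g α 3
    apply this.congr
    filter_upwards with x
    simp only [Pi.mul_apply]
  have huv : Integrable ((fun y => -(y ^ 2 + 2) * snPhi y) * fun y => 2 * snCdf (α * y) - 1) := by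
    have h2 := (integrable_pow_snPhi_mul_g α 2).neg
    have h0 := (integrable_pow_snPhi_mul_g α 0).const_mul (-2)
    apply (h2.add h0).congr
    filter_upwards with x
    simp only [Pi.mul_apply, Pi.add_apply, Pi.neg_apply, pow_zero]
    ring
  have key := integral_mul_deriv_eq_deriv_mul_of_integrable (fun x _ => hu x) (fun x _ => hv x) huv' hu'v huv
  have lhs : ∫ x : ℝ, -(x ^ 2 + 2) * snPhi x * (2 * α * snPhi (α * x))
      = -(2 * α) * ((2 * π)⁻¹ * (Real.sqrt (π / ((1 + α ^ 2) / 2)) / (2 * ((1 + α ^ 2) / 2))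
        + 2 * Real.sqrt (π / ((1 + α ^ 2) / 2)))) := by
    have heq : (fun x : ℝ => -(x ^ 2 + 2) * snPhi x * (2 * α * snPhi (α * x)))
        = fun x => -(2 * α) * (2 * π)⁻¹ * (x ^ 2 * Real.exp (-((1 + α ^ 2)/2) * x ^ 2))
          + -(2 * α) * (2 * π)⁻¹ * 2 * Real.exp (-((1 + α ^ 2)/2) * x ^ 2) := by
      funext x
      rw [show -(x ^ 2 + 2) * snPhi x * (2 * α * snPhi (α * x))
          = -(2 * α) * (x ^ 2 + 2) * (snPhi x * snPhi (α * x)) by ring, prod_snPhi]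
      ring
    rw [heq, integral_add, integral_const_mul, integral_const_mul,
      integral_sq_mul_gauss (c_pos α), integral_gaussian]
    · ring
    · exact ((integrable_pow_mul_gauss (c_pos α) 2).const_mul _)
    · exact ((integrable_exp_neg_mul_sq (c_pos α)).const_mul _)
  rw [lhs] at key
  linarith [key]

end Parts3

section Algebra
variable {α δ : ℝ} (hδ : δ = α / Real.sqrt (1 + α ^ 2))

lemma sqrt_one_add_sq_pos : (0:ℝ) < Real.sqrt (1 + α ^ 2) :=
  Real.sqrt_pos.mpr (by positivity)

include hδ

lemma A_eq : 2 * α * ((2 * π)⁻¹ * Real.sqrt (π / ((1 + α ^ 2) / 2)))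
    = δ * Real.sqrt (2 / π) := by
  have hs := sqrt_one_add_sq_pos (α := α)
  have hπ : (0:ℝ) < π := Real.pi_pos
  have hsπ : (0:ℝ) < Real.sqrt π := Real.sqrt_pos.mpr hπ
  have hππ : Real.sqrt π * Real.sqrt π = π := Real.mul_self_sqrt hπ.le
  have hss : Real.sqrt (1 + α ^ 2) * Real.sqrt (1 + α ^ 2) = 1 + α ^ 2 :=
    Real.mul_self_sqrt (by positivity)
  have h1 : π / ((1 + α ^ 2) / 2) = (2 * π) / (1 + α ^ 2) := by
    rw [div_div_eq_mul_div]; ring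
  have h2 : Real.sqrt ((2 * π) / (1 + α ^ 2))
      = Real.sqrt 2 * Real.sqrt π / Real.sqrt (1 + α ^ 2) := by
    rw [Real.sqrt_div (by positivity), Real.sqrt_mul (by norm_num)]
  have h3 : Real.sqrt (2 / π) = Real.sqrt 2 / Real.sqrt π := Real.sqrt_div (by norm_num) π
  rw [h1, h2, h3, hδ]
  field_simp
  linear_combination α * hππ

lemma delta_sq : δ ^ 2 = α ^ 2 / (1 + α ^ 2) := by
  have hss : (Real.sqrt (1 + α ^ 2)) ^ 2 = 1 + α ^ 2 := Real.sq_sqrt (by positivity)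
  rw [hδ, div_pow, hss]

lemma three_sub_delta_sq : 3 - δ ^ 2 = 1 / (1 + α ^ 2) + 2 := by
  rw [delta_sq hδ]
  have h : (0:ℝ) < 1 + α ^ 2 := by positivity
  field_simp
  ring

end Algebra

section Moments
variable (α : ℝ)

lemma integrable_pow_mul_F (n : ℕ) :
    Integrable (fun x : ℝ => x ^ n * (2 * snPhi x * snCdf (α * x))) := by
  have h := (integrable_pow_mul_snPhi n).add (integrable_pow_snPhi_mul_g α n)
  apply h.congr
  filter_upwards with x
  simp only [Pi.add_apply]
  ring

lemma moment_split (n : ℕ) : ∫ x : ℝ, x ^ n * (2 * snPhi x * snCdf (α * x))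
    = (∫ x : ℝ, x ^ n * snPhi x) + ∫ x : ℝ, x ^ n * snPhi x * (2 * snCdf (α * x) - 1) := by
  rw [← integral_add (integrable_pow_mul_snPhi n) (integrable_pow_snPhi_mul_g α n)]
  congr 1; funext x; ring

lemma even_part_zero (n : ℕ) (hn : Even n) :
    ∫ x : ℝ, x ^ n * snPhi x * (2 * snCdf (α * x) - 1) = 0 := by
  apply integral_odd_eq_zero
  intro x
  rw [snPhi_even, g_odd, hn.neg_pow]
  ring

lemma odd_part_zero (n : ℕ) (hn : Odd n) : ∫ x : ℝ, x ^ n * snPhi x = 0 := by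
  apply integral_odd_eq_zero
  intro x
  rw [snPhi_even, hn.neg_pow]
  ring

lemma M0_eq : ∫ x : ℝ, (x:ℝ) ^ 0 * (2 * snPhi x * snCdf (α * x)) = 1 := by
  rw [moment_split, even_part_zero α 0 (Even.zero)]
  simp only [pow_zero, one_mul]
  rw [integral_snPhi]; ring

lemma M2_eq : ∫ x : ℝ, (x:ℝ) ^ 2 * (2 * snPhi x * snCdf (α * x)) = 1 := by
  rw [moment_split, even_part_zero α 2 (by norm_num), integral_sq_mul_snPhi]; ring

end Moments

section MomentsDelta
variable {α δ : ℝ} (hδ : δ = α / Real.sqrt (1 + α ^ 2))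
include hδ

lemma M1_eq : ∫ x : ℝ, (x:ℝ) ^ 1 * (2 * snPhi x * snCdf (α * x)) = δ * Real.sqrt (2 / π) := by
  rw [moment_split, odd_part_zero 1 odd_one, zero_add, ← A_eq hδ, ← K1_eq α]
  congr 1; funext x; rw [pow_one]

lemma M3_eq : ∫ x : ℝ, (x:ℝ) ^ 3 * (2 * snPhi x * snCdf (α * x))
    = δ * Real.sqrt (2 / π) * (3 - δ ^ 2) := by
  rw [moment_split, odd_part_zero 3 (by decide), zero_add, K3_eq α]
  have h1p : (0:ℝ) < 1 + α ^ 2 := by positivity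
  have key : 2 * α * ((2 * π)⁻¹ * (Real.sqrt (π / ((1 + α ^ 2) / 2)) / (2 * ((1 + α ^ 2) / 2))
        + 2 * Real.sqrt (π / ((1 + α ^ 2) / 2))))
      = (2 * α * ((2 * π)⁻¹ * Real.sqrt (π / ((1 + α ^ 2) / 2)))) * (1 / (1 + α ^ 2) + 2) := by
    field_simp
  rw [key, A_eq hδ, ← three_sub_delta_sq hδ]

end MomentsDelta

/-- Third central moment and Pearson's skewness index of the standard skew normal. -/
theorem skew_normal_third_central_moment_and_skewness
    (α : ℝ) (δ : ℝ) (hδ : δ = α / Real.sqrt (1 + α ^ 2)) :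
    (∫ x : ℝ, (x - δ * Real.sqrt (2 / Real.pi)) ^ 3 * (2 * snPhi x * snCdf (α * x)) =
      (4 - Real.pi) / 2 * δ ^ 3 * (2 / Real.pi) ^ ((3 : ℝ) / 2)) ∧
    ((∫ x : ℝ, (x - δ * Real.sqrt (2 / Real.pi)) ^ 3 * (2 * snPhi x * snCdf (α * x))) /
        (1 - 2 * δ ^ 2 / Real.pi) ^ ((3 : ℝ) / 2) =
      (4 - Real.pi) / 2 * δ ^ 3 * (2 / Real.pi) ^ ((3 : ℝ) / 2) /
        (1 - 2 * δ ^ 2 / Real.pi) ^ ((3 : ℝ) / 2)) := by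
  set μ := δ * Real.sqrt (2 / π) with hμ
  have I0 := integrable_pow_mul_F α 0
  have I1 := integrable_pow_mul_F α 1
  have I2 := integrable_pow_mul_F α 2
  have I3 := integrable_pow_mul_F α 3
  have h1 : ∫ x : ℝ, (x - μ) ^ 3 * (2 * snPhi x * snCdf (α * x)) =
      (4 - π) / 2 * δ ^ 3 * (2 / π) ^ ((3 : ℝ) / 2) := by
    have expand : (fun x : ℝ => (x - μ) ^ 3 * (2 * snPhi x * snCdf (α * x)))
        = fun x : ℝ => (x ^ 3 * (2 * snPhi x * snCdf (α * x))
            - 3 * μ * (x ^ 2 * (2 * snPhi x * snCdf (α * x))))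
          + (3 * μ ^ 2 * (x ^ 1 * (2 * snPhi x * snCdf (α * x)))
            - μ ^ 3 * (x ^ 0 * (2 * snPhi x * snCdf (α * x)))) := by
      funext x; ring
    have I2' : Integrable (fun x : ℝ => 3 * μ * (x ^ 2 * (2 * snPhi x * snCdf (α * x)))) :=
      I2.const_mul _
    have I1' : Integrable (fun x : ℝ => 3 * μ ^ 2 * (x ^ 1 * (2 * snPhi x * snCdf (α * x)))) :=
      I1.const_mul _
    have I0' : Integrable (fun x : ℝ => μ ^ 3 * (x ^ 0 * (2 * snPhi x * snCdf (α * x)))) :=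
      I0.const_mul _
    have J1 : Integrable (fun x : ℝ => x ^ 3 * (2 * snPhi x * snCdf (α * x))
        - 3 * μ * (x ^ 2 * (2 * snPhi x * snCdf (α * x)))) := I3.sub I2'
    have J2 : Integrable (fun x : ℝ => 3 * μ ^ 2 * (x ^ 1 * (2 * snPhi x * snCdf (α * x)))
        - μ ^ 3 * (x ^ 0 * (2 * snPhi x * snCdf (α * x)))) := I1'.sub I0'
    rw [expand, integral_add J1 J2, integral_sub I3 I2', integral_sub I1' I0',
      integral_const_mul, integral_const_mul, integral_const_mul,
      M0_eq α, M2_eq α, M1_eq hδ, M3_eq hδ]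
    -- numeric finish
    have hb2 : (Real.sqrt (2 / π)) ^ 2 = 2 / π := Real.sq_sqrt (by positivity)
    have hr : ((2:ℝ) / π) ^ ((3 : ℝ) / 2) = (2 / π) * Real.sqrt (2 / π) := by
      rw [show (3:ℝ)/2 = 1 + 1/2 by norm_num,
        Real.rpow_add (by positivity), Real.rpow_one, ← Real.sqrt_eq_rpow]
    rw [hr, hμ]
    set s := Real.sqrt (2 / π) with hs
    have hb2' : s ^ 2 = 2 / π := hb2
    have hb3 : s ^ 2 * π = 2 := by
      rw [hb2']
      field_simp
    rw [← hb2']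
    linear_combination (δ ^ 3 * s / 2) * hb3
  exact ⟨h1, by rw [h1]⟩
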